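/- The double graph of any cycle of length at least 3 contains a Hamilton cycle. -/

import Mathlib

open SimpleGraph

/-- The double graph of `R`: two copies of `R`, and for every edge `uv` of `R` also the
edges between `u` and the copy of `v`, and between the copy of `u` and `v`. -/
def doubleGraph {α : Type*} (R : SimpleGraph α) : SimpleGraph (α × Bool) where
  Adj a b := R.Adj a.1 b.1
  symm := ⟨fun a b h => R.adj_symm h⟩
  loopless := ⟨fun a h => R.irrefl h⟩

private def upWalk (m : ℕ) : (i : ℕ) → (h : i < m + 3) → (cycleGraph (m + 3)).Walk ⟨i, h⟩ 0
  | 0, _ => Walk.nil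
  | i + 1, h =>
    have hi : i < m + 3 := by omega
    Walk.cons (show (cycleGraph (m + 3)).Adj ⟨i + 1, h⟩ ⟨i, hi⟩ by
      rw [cycleGraph_adj]
      left
      apply Fin.ext
      rw [Fin.sub_def]
      simp only [Fin.val_one]
      have e : m + 3 - i + (i + 1) = (m + 3) + 1 := by omega
      rw [e, Nat.add_mod_left, Nat.mod_eq_of_lt (by omega)]) (upWalk m i hi)

private lemma upWalk_support_map (m : ℕ) : ∀ i (h : i < m + 3),
    (upWalk m i h).support.map Fin.val = (List.range (i + 1)).reverse
  | 0, _ => by simp [upWalk, List.range_succ]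
  | i + 1, h => by
    rw [upWalk, Walk.support_cons, List.map_cons, upWalk_support_map m i,
      List.range_succ (n := i + 1), List.reverse_append]
    simp

private lemma upWalk_edges (m : ℕ) : ∀ i (h : i < m + 3), ∀ e ∈ (upWalk m i h).edges,
    (0 : Fin (m + 3)) ∈ e → (1 : Fin (m + 3)) ∈ e
  | 0, _ => by simp [upWalk]
  | i + 1, h => by
    intro e he h0
    rw [upWalk, Walk.edges_cons] at he
    rcases List.mem_cons.mp he with rfl | he
    · rcases Sym2.mem_iff.mp h0 with h0 | h0
      · exfalso
        have := congrArg Fin.val h0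
        simp at this
      · have : i = 0 := by
          have := congrArg Fin.val h0
          simpa using this.symm
        subst this
        rw [Sym2.mem_iff]
        left
        apply Fin.ext
        simp
    · exact upWalk_edges m i _ e he h0

private lemma upWalk_isPath (m i : ℕ) (h : i < m + 3) : (upWalk m i h).IsPath := by
  rw [Walk.isPath_def]
  apply List.Nodup.of_map Fin.val
  rw [upWalk_support_map]
  exact List.nodup_reverse.mpr List.nodup_range

private lemma cycleGraph_exists_hamCycle (k : ℕ) (hk : 3 ≤ k) :
    ∃ (a : Fin k) (p : (cycleGraph k).Walk a a), p.IsHamiltonianCycle := by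
  obtain ⟨m, rfl⟩ : ∃ m, k = m + 3 := ⟨k - 3, by omega⟩
  have hadj : (cycleGraph (m + 3)).Adj 0 ⟨m + 2, by omega⟩ := by
    rw [cycleGraph_adj]
    left
    apply Fin.ext
    rw [Fin.sub_def]
    simp only [Fin.val_one, Fin.val_zero]
    have e : m + 3 - (m + 2) + 0 = 1 := by omega
    rw [e, Nat.mod_eq_of_lt (by omega)]
  refine ⟨0, Walk.cons hadj (upWalk m (m + 2) (by omega)), ?_⟩
  rw [Walk.isHamiltonianCycle_iff_isCycle_and_support_count_tail_eq_one]
  constructor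
  · rw [Walk.cons_isCycle_iff]
    refine ⟨upWalk_isPath m (m + 2) _, fun hmem => ?_⟩
    have h1 := upWalk_edges m (m + 2) _ _ hmem (by rw [Sym2.mem_iff]; left; rfl)
    rcases Sym2.mem_iff.mp h1 with h1 | h1
    · exact absurd (congrArg Fin.val h1) (by simp)
    · have := congrArg Fin.val h1
      simp only [Fin.val_one] at this
      omega
  · intro a
    rw [Walk.support_cons, List.tail_cons,
      ← List.count_map_of_injective _ Fin.val Fin.val_injective, upWalk_support_map]
    rw [List.count_reverse]
    exact List.count_eq_one_of_mem List.nodup_range (List.mem_range.mpr (by omega))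

private lemma mod_helper (n u v : ℕ) (hn : 3 ≤ n) (hv : v < 2 * n)
    (h : (2 * n - v + u) % (2 * n) = 1) : (n - v % n + u % n) % n = 1 := by
  have h1 : u ≡ v + 1 [MOD 2 * n] := by
    have h2 : (2 * n - v + u) ≡ 1 [MOD 2 * n] := by
      unfold Nat.ModEq
      rw [h, Nat.mod_eq_of_lt (by omega)]
    have h3 := h2.add_right v
    have e : 2 * n - v + u + v = 2 * n + u := by omega
    rw [e] at h3
    calc u ≡ 2 * n + u [MOD 2 * n] := (Nat.modEq_iff_dvd' (by omega)).mpr ⟨1, by omega⟩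
    _ ≡ 1 + v [MOD 2 * n] := h3
    _ = v + 1 := by omega
  have h4 : u ≡ v + 1 [MOD n] := Nat.ModEq.of_dvd ⟨2, by ring⟩ h1
  have h5 : u % n ≡ v % n + 1 [MOD n] :=
    (Nat.mod_modEq u n).trans (h4.trans ((Nat.mod_modEq v n).symm.add_right 1))
  have h6 : (n - v % n + u % n) ≡ n + 1 [MOD n] := by
    have := (Nat.ModEq.refl (n - v % n)).add h5
    have e : n - v % n + (v % n + 1) = n + 1 := by
      have hb : v % n < n := Nat.mod_lt _ (by omega); omega
    rwa [e] at this
  have h7 : (n - v % n + u % n) ≡ 1 [MOD n] :=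
    h6.trans (by unfold Nat.ModEq; rw [Nat.add_mod_left])
  unfold Nat.ModEq at h7
  rwa [Nat.mod_eq_of_lt (show (1:ℕ) < n by omega)] at h7

/-- The double graph of any cycle of length at least `3` contains a Hamilton cycle. -/
theorem stmt6 (n : ℕ) (hn : 3 ≤ n) : (doubleGraph (cycleGraph n)).IsHamiltonian := by
  intro _
  have hn0 : 0 < n := by omega
  set f : Fin (2 * n) → Fin n × Bool :=
    fun k => (⟨k.val % n, Nat.mod_lt _ hn0⟩, decide (n ≤ k.val)) with hf
  have hhom : ∀ {u v : Fin (2 * n)}, (cycleGraph (2 * n)).Adj u v →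
      (doubleGraph (cycleGraph n)).Adj (f u) (f v) := by
    intro u v huv
    rw [cycleGraph_adj'] at huv
    show (cycleGraph n).Adj _ _
    rw [cycleGraph_adj']
    rcases huv with h | h
    · left
      rw [Fin.sub_def] at h ⊢
      simp only [Fin.val_one] at h ⊢
      exact mod_helper n u.val v.val hn v.isLt h
    · right
      rw [Fin.sub_def] at h ⊢
      simp only [Fin.val_one] at h ⊢
      exact mod_helper n v.val u.val hn u.isLt h
  have hinj : Function.Injective f := by
    intro u v huv
    rw [hf, Prod.mk.injEq, Fin.mk.injEq, decide_eq_decide] at huv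
    obtain ⟨h1, h2⟩ := huv
    have hu := u.isLt
    have hv := v.isLt
    apply Fin.ext
    rcases le_or_gt n u.val with hcu | hcu <;> rcases le_or_gt n v.val with hcv | hcv
    · rw [Nat.mod_eq_sub_mod hcu, Nat.mod_eq_of_lt (by omega),
        Nat.mod_eq_sub_mod hcv, Nat.mod_eq_of_lt (by omega)] at h1
      omega
    · omega
    · omega
    · rwa [Nat.mod_eq_of_lt hcu, Nat.mod_eq_of_lt hcv] at h1
  have hbij : Function.Bijective f := by
    rw [Fintype.bijective_iff_injective_and_card]
    refine ⟨hinj, by simp [mul_comm]⟩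
  obtain ⟨a, p, hp⟩ := cycleGraph_exists_hamCycle (2 * n) (by omega)
  exact ⟨f a, p.map ⟨f, hhom⟩, hp.map (f := ⟨f, hhom⟩) hbij⟩
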